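/- Let A be a finite-dimensional left Leibniz algebra and a ∈ A. Then there exists a' ∈ E_A(a) with L_{a'} = L_a, and in particular E_A(a') = E_A(a). -/

import Mathlib

/-- for each `a` there is `a' ∈ E_A(a)` with `L_{a'} = L_a`, so in particular
`E_A(a') = E_A(a)`. -/
theorem exists_engel_generator_in_engel {F A : Type*} [Field F] [AddCommGroup A] [Module F A]
    [FiniteDimensional F A]
    (mul : A →ₗ[F] A →ₗ[F] A)
    (leibniz : ∀ a b c : A, mul a (mul b c) = mul (mul a b) c + mul b (mul a c))
    (a : A) :
    ∃ a' : A, (∃ n : ℕ, (mul a ^ n) a' = 0) ∧ mul a' = mul a ∧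
      {x : A | ∃ n : ℕ, (mul a' ^ n) x = 0} = {x : A | ∃ n : ℕ, (mul a ^ n) x = 0} := by
  classical
  -- if mul b = 0 then mul (mul a b) = 0
  have key : ∀ b : A, mul b = 0 → mul (mul a b) = 0 := by
    intro b hb
    ext c
    have h := leibniz a b c
    rw [hb] at h
    simpa using h.symm
  -- mul of (mul a)^(m+1) a vanishes
  have pow_zero : ∀ m : ℕ, mul ((mul a ^ (m + 1)) a) = 0 := by
    intro m
    induction m with
    | zero =>
      have : mul (mul a a) = 0 := by
        ext c
        have h := leibniz a a c
        have h2 : mul (mul a a) c + mul a (mul a c) = 0 + mul a (mul a c) := by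
          rw [zero_add, ← h]
        simpa using add_right_cancel h2
      simpa using this
    | succ n ih =>
      have : (mul a ^ (n + 2)) a = mul a ((mul a ^ (n + 1)) a) := by
        rw [pow_succ']
        rfl
      rw [this]
      exact key _ ih
  -- the subalgebra generated by a
  set B : Submodule F A := Submodule.span F (Set.range fun n : ℕ => (mul a ^ n) a) with hBdef
  have haB : a ∈ B := Submodule.subset_span ⟨0, by simp⟩
  have hB : ∀ x ∈ B, mul a x ∈ B := by
    intro x hx
    induction hx using Submodule.span_induction with
    | mem x hx =>
      obtain ⟨n, rfl⟩ := hx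
      exact Submodule.subset_span ⟨n + 1, by simp only []; rw [pow_succ']; rfl⟩
    | zero => simp
    | add x y _ _ hx hy => rw [map_add]; exact add_mem hx hy
    | smul c x _ hx => rw [map_smul]; exact Submodule.smul_mem _ _ hx
  -- mul vanishes on (mul a)^k of B for k ≥ 1
  have mulB : ∀ k : ℕ, 1 ≤ k → ∀ x ∈ B, mul ((mul a ^ k) x) = 0 := by
    intro k hk x hx
    induction hx using Submodule.span_induction with
    | mem x hx =>
      obtain ⟨n, rfl⟩ := hx
      have h1 : (mul a ^ k) ((mul a ^ n) a) = (mul a ^ (k + n)) a := by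
        rw [← Module.End.mul_apply, ← pow_add]
      obtain ⟨m, hm⟩ : ∃ m, k + n = m + 1 := ⟨k + n - 1, by omega⟩
      rw [h1, hm]
      exact pow_zero m
    | zero => simp
    | add x y _ _ hx hy => rw [map_add, map_add, hx, hy, add_zero]
    | smul c x _ hx => rw [map_smul, map_smul, hx, smul_zero]
  -- Fitting decomposition of B under mul a
  set f : B →ₗ[F] B := (mul a).restrict hB with hfdef
  obtain ⟨N, hN⟩ := Filter.eventually_atTop.mp f.eventually_isCompl_ker_pow_range_pow
  set k := max N 1 with hkdef
  have hk1 : 1 ≤ k := le_max_right _ _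
  have hc := hN k (le_max_left _ _)
  have hsup : LinearMap.ker (f ^ k) ⊔ LinearMap.range (f ^ k) = ⊤ :=
    codisjoint_iff.mp hc.codisjoint
  have hmem : (⟨a, haB⟩ : B) ∈ LinearMap.ker (f ^ k) ⊔ LinearMap.range (f ^ k) := by
    rw [hsup]; trivial
  obtain ⟨u, hu, v, hv, huv⟩ := Submodule.mem_sup.mp hmem
  have hpow : f ^ k = ((mul a) ^ k).restrict
      (Module.End.pow_apply_mem_of_forall_mem k hB) := Module.End.pow_restrict k hB
  -- coercion of f^k
  have hcoe : ∀ x : B, ((f ^ k) x : A) = ((mul a) ^ k) (x : A) := by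
    intro x
    rw [hpow, LinearMap.restrict_coe_apply]
  refine ⟨(u : A), ⟨k, ?_⟩, ?_, ?_⟩
  · have := hcoe u
    rw [LinearMap.mem_ker.mp hu] at this
    simpa using this.symm
  · -- mul u = mul a
    obtain ⟨w, hw⟩ := hv
    have hv0 : mul (v : A) = 0 := by
      rw [← hw, hcoe w]
      exact mulB k hk1 (w : A) w.2
    have hsum : (u : A) + (v : A) = a := by
      have := congrArg (Subtype.val) huv
      simpa using this
    have : mul a = mul (u : A) + mul (v : A) := by rw [← hsum, map_add]
    rw [hv0, add_zero] at this
    exact this.symm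
  · -- set equality
    obtain ⟨w, hw⟩ := hv
    have hv0 : mul (v : A) = 0 := by
      rw [← hw, hcoe w]
      exact mulB k hk1 (w : A) w.2
    have hsum : (u : A) + (v : A) = a := by
      have := congrArg (Subtype.val) huv
      simpa using this
    have hmu : mul (u : A) = mul a := by
      have : mul a = mul (u : A) + mul (v : A) := by rw [← hsum, map_add]
      rw [hv0, add_zero] at this
      exact this.symm
    rw [hmu]
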